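/- Let M be a von Neumann algebra acting on a complex Hilbert space H, let P : M → M be a normal, unital, completely positive linear map, and let (π, K, W) be a minimal Stinespring triple for P. Then the map X ↦ W*X is a bijection from the intertwining space L := {X ∈ B(H,K) : XS = π(S)X for all S ∈ M} onto the Arveson correspondence E_P; more precisely: (i) for every X ∈ L, the operator Y = W*X satisfies the P-boundedness condition with constant C = ‖X‖², and (ii) for every Y ∈ E_P there is a unique X ∈ L with W*X = Y, and this X satisfies X*π(S)Wh = S Y* h for all S ∈ M and h ∈ H. -/

import Mathlib

open scoped ComplexOrder
open ContinuousLinearMap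

noncomputable section

/-- Positivity of an `n × n` operator matrix `(a i j)`, regarded as an operator on the
`n`-fold direct sum `Hⁿ`: `∑ᵢⱼ ⟨kᵢ, a i j kⱼ⟩ ≥ 0` for all `k₁, …, kₙ ∈ H`. -/
def PosOpMatrix {H : Type*} [NormedAddCommGroup H] [InnerProductSpace ℂ H] {n : ℕ}
    (a : Fin n → Fin n → (H →L[ℂ] H)) : Prop :=
  ∀ k : Fin n → H, 0 ≤ ∑ i, ∑ j, (inner ℂ (k i) (a i j (k j)) : ℂ)

/-- Complete positivity of a map relative to a von Neumann algebra `M`: positive operator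
matrices with entries in `M` are sent to positive operator matrices. -/
def IsCPOn {H : Type*} [NormedAddCommGroup H] [InnerProductSpace ℂ H] [CompleteSpace H]
    (M : VonNeumannAlgebra H) (P : (H →L[ℂ] H) → (H →L[ℂ] H)) : Prop :=
  ∀ (n : ℕ) (a : Fin n → Fin n → (H →L[ℂ] H)),
    (∀ i j, a i j ∈ M) → PosOpMatrix a → PosOpMatrix fun i j => P (a i j)

/-- Weak-operator continuity of a map on bounded subsets of `s`; for bounded linear maps on
von Neumann algebras this captures normality (σ-weak continuity). -/
def WOTContinuousOnBalls {H K : Type*} [NormedAddCommGroup H] [InnerProductSpace ℂ H]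
    [NormedAddCommGroup K] [InnerProductSpace ℂ K]
    (s : Set (H →L[ℂ] H)) (f : (H →L[ℂ] H) → (K →L[ℂ] K)) : Prop :=
  ∀ r : ℝ, ContinuousOn
    (fun T : H →WOT[ℂ] H =>
      (ContinuousLinearMapWOT.linearEquiv ℂ : (K →WOT[ℂ] K) ≃ₗ[ℂ] (K →L[ℂ] K)).symm (f ((ContinuousLinearMapWOT.linearEquiv ℂ : (H →WOT[ℂ] H) ≃ₗ[ℂ] (H →L[ℂ] H)) T)))
    ((ContinuousLinearMapWOT.linearEquiv ℂ : (H →WOT[ℂ] H) ≃ₗ[ℂ] (H →L[ℂ] H)).symm '' (s ∩ Metric.closedBall 0 r))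

/-- The closure of a set of operators in the weak operator topology. -/
def WOTClosure {H K : Type*} [NormedAddCommGroup H] [InnerProductSpace ℂ H]
    [NormedAddCommGroup K] [InnerProductSpace ℂ K] (s : Set (H →L[ℂ] K)) : Set (H →L[ℂ] K) :=
  (ContinuousLinearMapWOT.linearEquiv ℂ : (H →WOT[ℂ] K) ≃ₗ[ℂ] (H →L[ℂ] K)).symm ⁻¹' closure ((ContinuousLinearMapWOT.linearEquiv ℂ : (H →WOT[ℂ] K) ≃ₗ[ℂ] (H →L[ℂ] K)).symm '' s)

/-- A unital normal `*`-representation of (the elements of) a von Neumann algebra `M` on a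
Hilbert space `K`, encoded as a function on all of `B(H)` whose properties are imposed only on
members of `M`. -/
structure IsNormalRepOn {H K : Type*} [NormedAddCommGroup H] [InnerProductSpace ℂ H]
    [CompleteSpace H] [NormedAddCommGroup K] [InnerProductSpace ℂ K] [CompleteSpace K]
    (M : VonNeumannAlgebra H) (π : (H →L[ℂ] H) → (K →L[ℂ] K)) : Prop where
  map_add : ∀ S ∈ M, ∀ T ∈ M, π (S + T) = π S + π T
  map_smul : ∀ (c : ℂ), ∀ T ∈ M, π (c • T) = c • π T
  map_mul : ∀ S ∈ M, ∀ T ∈ M, π (S * T) = π S * π T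
  map_star : ∀ T ∈ M, π (star T) = star (π T)
  map_one : π 1 = 1
  normal : WOTContinuousOnBalls (M : Set (H →L[ℂ] H)) π

/-- A completely positive linear map of a von Neumann algebra `M` into itself. -/
structure IsCPMapOn {H : Type*} [NormedAddCommGroup H] [InnerProductSpace ℂ H] [CompleteSpace H]
    (M : VonNeumannAlgebra H) (P : (H →L[ℂ] H) → (H →L[ℂ] H)) : Prop where
  map_mem : ∀ T ∈ M, P T ∈ M
  map_add : ∀ S ∈ M, ∀ T ∈ M, P (S + T) = P S + P T
  map_smul : ∀ (c : ℂ), ∀ T ∈ M, P (c • T) = c • P T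
  cp : IsCPOn M P

/-- A normal, unital, completely positive map on a von Neumann algebra `M`. -/
structure IsUNCPMapOn {H : Type*} [NormedAddCommGroup H] [InnerProductSpace ℂ H] [CompleteSpace H]
    (M : VonNeumannAlgebra H) (P : (H →L[ℂ] H) → (H →L[ℂ] H))
    extends IsCPMapOn M P : Prop where
  map_one : P 1 = 1
  normal : WOTContinuousOnBalls (M : Set (H →L[ℂ] H)) P

/-- A Stinespring triple `(π, K, W)` for `P`: `π` is a unital normal `*`-representation of `M`
on `K`, `W : H → K` is an isometry, and `P T = W* (π T) W` for `T ∈ M`. -/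
structure IsStinespring {H K : Type*} [NormedAddCommGroup H] [InnerProductSpace ℂ H]
    [CompleteSpace H] [NormedAddCommGroup K] [InnerProductSpace ℂ K] [CompleteSpace K]
    (M : VonNeumannAlgebra H) (P : (H →L[ℂ] H) → (H →L[ℂ] H))
    (π : (H →L[ℂ] H) → (K →L[ℂ] K)) (W : H →L[ℂ] K) : Prop where
  rep : IsNormalRepOn M π
  isometry : ∀ h : H, ‖W h‖ = ‖h‖
  dilation : ∀ T ∈ M, P T = ContinuousLinearMap.adjoint W ∘L (π T ∘L W)

/-- A minimal Stinespring triple: additionally `{π(T) W h}` has dense span in `K`. -/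
structure IsMinimalStinespring {H K : Type*} [NormedAddCommGroup H] [InnerProductSpace ℂ H]
    [CompleteSpace H] [NormedAddCommGroup K] [InnerProductSpace ℂ K] [CompleteSpace K]
    (M : VonNeumannAlgebra H) (P : (H →L[ℂ] H) → (H →L[ℂ] H))
    (π : (H →L[ℂ] H) → (K →L[ℂ] K)) (W : H →L[ℂ] K)
    extends IsStinespring M P π W : Prop where
  minimal :
    (Submodule.span ℂ {k : K | ∃ T ∈ M, ∃ h : H, k = π T (W h)}).topologicalClosure = ⊤

/-- The `P`-boundedness condition with constant `C` for an operator `Y ∈ B(H)`: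
`‖∑ᵢ Sᵢ Y* hᵢ‖² ≤ C ∑ᵢⱼ ⟨hᵢ, P(Sᵢ* Sⱼ) hⱼ⟩` for all `Sᵢ ∈ M` and `hᵢ ∈ H`. -/
def PBound {H : Type*} [NormedAddCommGroup H] [InnerProductSpace ℂ H] [CompleteSpace H]
    (M : VonNeumannAlgebra H) (P : (H →L[ℂ] H) → (H →L[ℂ] H))
    (Y : H →L[ℂ] H) (C : ℝ) : Prop :=
  ∀ (n : ℕ) (S : Fin n → (H →L[ℂ] H)), (∀ i, S i ∈ M) → ∀ h : Fin n → H,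
    ((‖∑ i, S i (ContinuousLinearMap.adjoint Y (h i))‖ ^ 2 : ℝ) : ℂ) ≤
      (C : ℂ) * ∑ i, ∑ j, (inner ℂ (h i) (P (star (S i) * S j) (h j)) : ℂ)

/-- The Arveson correspondence of `P`: all `Y ∈ B(H)` satisfying the `P`-boundedness
condition with some nonnegative constant. -/
def ArvesonCorrespondence {H : Type*} [NormedAddCommGroup H] [InnerProductSpace ℂ H]
    [CompleteSpace H] (M : VonNeumannAlgebra H) (P : (H →L[ℂ] H) → (H →L[ℂ] H)) :
    Set (H →L[ℂ] H) :=
  {Y | ∃ C : ℝ, 0 ≤ C ∧ PBound M P Y C}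

/-- A cp-semigroup on `M`: a semigroup `{P_t}_{t ≥ 0}` of unital, normal, completely positive
maps on `M` with `P_0 = id`. -/
structure IsCpSemigroup {H : Type*} [NormedAddCommGroup H] [InnerProductSpace ℂ H]
    [CompleteSpace H] (M : VonNeumannAlgebra H)
    (P : ℝ → (H →L[ℂ] H) → (H →L[ℂ] H)) : Prop where
  uncp : ∀ t : ℝ, 0 ≤ t → IsUNCPMapOn M (P t)
  id_zero : ∀ T ∈ M, P 0 T = T
  comp : ∀ s t : ℝ, 0 ≤ s → 0 ≤ t → ∀ T ∈ M, P (t + s) T = P t (P s T)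

/-- Weak continuity of a cp-semigroup: `t ↦ ⟨P_t(a) h, k⟩` is continuous on `[0, ∞)`. -/
def IsWeaklyContinuousSemigroup {H : Type*} [NormedAddCommGroup H] [InnerProductSpace ℂ H]
    [CompleteSpace H] (M : VonNeumannAlgebra H)
    (P : ℝ → (H →L[ℂ] H) → (H →L[ℂ] H)) : Prop :=
  ∀ T ∈ M, ∀ h k : H,
    ContinuousOn (fun t : ℝ => (inner ℂ ((P t T) h) k : ℂ)) (Set.Ici (0 : ℝ))

/-- A semigroup `{α_t}_{t ≥ 0}` of unital, normal `*`-endomorphisms of a von Neumann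
algebra `R`, with `α_0 = id`. -/
structure IsEndoSemigroup {K : Type*} [NormedAddCommGroup K] [InnerProductSpace ℂ K]
    [CompleteSpace K] (R : VonNeumannAlgebra K)
    (α : ℝ → (K →L[ℂ] K) → (K →L[ℂ] K)) : Prop where
  rep : ∀ t : ℝ, 0 ≤ t → IsNormalRepOn R (α t)
  map_mem : ∀ t : ℝ, 0 ≤ t → ∀ S ∈ R, α t S ∈ R
  id_zero : ∀ S ∈ R, α 0 S = S
  comp : ∀ s t : ℝ, 0 ≤ s → 0 ≤ t → ∀ S ∈ R, α (t + s) S = α t (α s S)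

/-- Auxiliary: the fundamental identity relating the `P`-matrix inner products to norms in the
dilation space. -/
lemma sum_inner_P_eq {H K : Type*}
    [NormedAddCommGroup H] [InnerProductSpace ℂ H] [CompleteSpace H]
    [NormedAddCommGroup K] [InnerProductSpace ℂ K] [CompleteSpace K]
    {M : VonNeumannAlgebra H} {P : (H →L[ℂ] H) → (H →L[ℂ] H)}
    {π : (H →L[ℂ] H) → (K →L[ℂ] K)} {W : H →L[ℂ] K}
    (hSt : IsStinespring M P π W)
    {n : ℕ} (S : Fin n → (H →L[ℂ] H)) (hS : ∀ i, S i ∈ M) (h : Fin n → H) :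
    (∑ i, ∑ j, (inner ℂ (h i) (P (star (S i) * S j) (h j)) : ℂ)) =
      ((‖∑ i, π (S i) (W (h i))‖ ^ 2 : ℝ) : ℂ) := by
  have term : ∀ i j, (inner ℂ (h i) (P (star (S i) * S j) (h j)) : ℂ)
      = inner ℂ (π (S i) (W (h i))) (π (S j) (W (h j))) := by
    intro i j
    rw [hSt.dilation _ (mul_mem (star_mem (hS i)) (hS j))]
    simp only [ContinuousLinearMap.comp_apply]
    rw [ContinuousLinearMap.adjoint_inner_right,
      hSt.rep.map_mul _ (star_mem (hS i)) _ (hS j),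
      hSt.rep.map_star _ (hS i)]
    simp only [ContinuousLinearMap.mul_apply]
    rw [ContinuousLinearMap.star_eq_adjoint, ContinuousLinearMap.adjoint_inner_right]
  simp_rw [term]
  have : ((‖∑ i, π (S i) (W (h i))‖ ^ 2 : ℝ) : ℂ)
      = inner ℂ (∑ i, π (S i) (W (h i))) (∑ j, π (S j) (W (h j))) := by
    rw [inner_self_eq_norm_sq_to_K]; norm_cast
  rw [this, sum_inner]
  exact Finset.sum_congr rfl fun i _ => by rw [inner_sum]

set_option maxHeartbeats 1000000 in
/-- `X ↦ W* X` is a bijection between the intertwining space of a minimal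
Stinespring triple for `P` and the Arveson correspondence `E_P`. -/
theorem intertwiner_equiv_arveson {H K : Type*}
    [NormedAddCommGroup H] [InnerProductSpace ℂ H] [CompleteSpace H]
    [NormedAddCommGroup K] [InnerProductSpace ℂ K] [CompleteSpace K]
    (M : VonNeumannAlgebra H) (P : (H →L[ℂ] H) → (H →L[ℂ] H)) (hP : IsUNCPMapOn M P)
    (π : (H →L[ℂ] H) → (K →L[ℂ] K)) (W : H →L[ℂ] K)
    (hmin : IsMinimalStinespring M P π W) :
    (∀ X : H →L[ℂ] K, (∀ S ∈ M, X ∘L S = π S ∘L X) →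
      PBound M P (ContinuousLinearMap.adjoint W ∘L X) (‖X‖ ^ 2)) ∧
    (∀ Y ∈ ArvesonCorrespondence M P,
      ∃ X : H →L[ℂ] K, (∀ S ∈ M, X ∘L S = π S ∘L X) ∧
        ContinuousLinearMap.adjoint W ∘L X = Y ∧
        (∀ S ∈ M, ∀ h : H,
          ContinuousLinearMap.adjoint X (π S (W h)) = S (ContinuousLinearMap.adjoint Y h)) ∧
        (∀ X' : H →L[ℂ] K, (∀ S ∈ M, X' ∘L S = π S ∘L X') →
          ContinuousLinearMap.adjoint W ∘L X' = Y → X' = X)) := by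
  have hSt := hmin.toIsStinespring
  -- A general fact: if `X` intertwines, then `X* π(S) = S X*` on `M`.
  have hstar : ∀ X : H →L[ℂ] K, (∀ S ∈ M, X ∘L S = π S ∘L X) →
      ∀ S ∈ M, ∀ k : K, ContinuousLinearMap.adjoint X (π S k)
        = S (ContinuousLinearMap.adjoint X k) := by
    intro X hX S hSm k
    have h1 := congrArg ContinuousLinearMap.adjoint (hX (star S) (star_mem hSm))
    rw [ContinuousLinearMap.adjoint_comp, ContinuousLinearMap.adjoint_comp,
      ← ContinuousLinearMap.star_eq_adjoint (star S), star_star,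
      hSt.rep.map_star _ hSm, ← ContinuousLinearMap.star_eq_adjoint (star (π S)),
      star_star] at h1
    -- h1 : S ∘L adjoint X = adjoint X ∘L π S
    exact (ContinuousLinearMap.ext_iff.mp h1 k).symm
  constructor
  · -- Part (i)
    intro X hX n S hS h
    have hYadj : ContinuousLinearMap.adjoint (ContinuousLinearMap.adjoint W ∘L X)
        = ContinuousLinearMap.adjoint X ∘L W := by
      rw [ContinuousLinearMap.adjoint_comp, ContinuousLinearMap.adjoint_adjoint]
    have hsum : ∑ i, S i (ContinuousLinearMap.adjoint (ContinuousLinearMap.adjoint W ∘L X) (h i))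
        = ContinuousLinearMap.adjoint X (∑ i, π (S i) (W (h i))) := by
      rw [map_sum]
      refine Finset.sum_congr rfl fun i _ => ?_
      rw [hYadj, hstar X hX _ (hS i)]
      rfl
    rw [hsum, sum_inner_P_eq hSt S hS h]
    set v := ∑ i, π (S i) (W (h i))
    have hb : ‖ContinuousLinearMap.adjoint X v‖ ≤ ‖X‖ * ‖v‖ := by
      calc ‖ContinuousLinearMap.adjoint X v‖ ≤ ‖ContinuousLinearMap.adjoint X‖ * ‖v‖ :=
            (ContinuousLinearMap.adjoint X).le_opNorm v
        _ = ‖X‖ * ‖v‖ := by rw [ContinuousLinearMap.adjoint.norm_map]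
    have hreal : (‖ContinuousLinearMap.adjoint X v‖ ^ 2 : ℝ) ≤ ‖X‖ ^ 2 * ‖v‖ ^ 2 := by
      have := pow_le_pow_left₀ (norm_nonneg _) hb 2
      calc (‖ContinuousLinearMap.adjoint X v‖ ^ 2 : ℝ) ≤ (‖X‖ * ‖v‖) ^ 2 := this
        _ = ‖X‖ ^ 2 * ‖v‖ ^ 2 := by ring
    calc ((‖ContinuousLinearMap.adjoint X v‖ ^ 2 : ℝ) : ℂ)
        ≤ ((‖X‖ ^ 2 * ‖v‖ ^ 2 : ℝ) : ℂ) := Complex.real_le_real.mpr hreal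
      _ = ((‖X‖ ^ 2 : ℝ) : ℂ) * ((‖v‖ ^ 2 : ℝ) : ℂ) := by push_cast; ring
  · -- Part (ii)
    rintro Y ⟨C, hC0, hPB⟩
    classical
    set u : (↥M × H) → H := fun p => (p.1 : H →L[ℂ] H) (ContinuousLinearMap.adjoint Y p.2)
      with hu_def
    set v : (↥M × H) → K := fun p => π (p.1 : H →L[ℂ] H) (W p.2) with hv_def
    set Φ : ((↥M × H) →₀ ℂ) →ₗ[ℂ] K := Finsupp.linearCombination ℂ v with hΦ_def
    set Ψ : ((↥M × H) →₀ ℂ) →ₗ[ℂ] H := Finsupp.linearCombination ℂ u with hΨ_def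
    -- the key norm estimate
    have keyineq : ∀ c : (↥M × H) →₀ ℂ, ‖Ψ c‖ ^ 2 ≤ C * ‖Φ c‖ ^ 2 := by
      intro c
      set m := Fintype.card ↥c.support
      set eqv : ↥c.support ≃ Fin m := Fintype.equivFin _ with heqv
      set g : Fin m → ↥M × H := fun i => (eqv.symm i : ↥M × H) with hg
      set S : Fin m → (H →L[ℂ] H) := fun i => ((g i).1 : H →L[ℂ] H) with hSdef
      set h : Fin m → H := fun i => c (g i) • (g i).2 with hhdef
      have hS : ∀ i, S i ∈ M := fun i => (g i).1.2
      have hgenH : ∀ (w : (↥M × H) → H),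
          ∑ i, c (g i) • w (g i) = Finsupp.linearCombination ℂ w c := by
        intro w
        calc ∑ i, c (g i) • w (g i)
            = ∑ a : ↥c.support, c (a : ↥M × H) • w (a : ↥M × H) :=
              Equiv.sum_comp eqv.symm (fun a : ↥c.support => c (a : ↥M × H) • w (a : ↥M × H))
          _ = ∑ a ∈ c.support, c a • w a := Finset.sum_coe_sort c.support (fun x => c x • w x)
          _ = Finsupp.linearCombination ℂ w c := by
              rw [Finsupp.linearCombination_apply, Finsupp.sum]
      have hgenK : ∀ (w : (↥M × H) → K),
          ∑ i, c (g i) • w (g i) = Finsupp.linearCombination ℂ w c := by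
        intro w
        calc ∑ i, c (g i) • w (g i)
            = ∑ a : ↥c.support, c (a : ↥M × H) • w (a : ↥M × H) :=
              Equiv.sum_comp eqv.symm (fun a : ↥c.support => c (a : ↥M × H) • w (a : ↥M × H))
          _ = ∑ a ∈ c.support, c a • w a := Finset.sum_coe_sort c.support (fun x => c x • w x)
          _ = Finsupp.linearCombination ℂ w c := by
              rw [Finsupp.linearCombination_apply, Finsupp.sum]
      have hsum1 : ∑ i, S i (ContinuousLinearMap.adjoint Y (h i)) = Ψ c := by
        calc ∑ i, S i (ContinuousLinearMap.adjoint Y (h i))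
            = ∑ i, c (g i) • u (g i) := by
              refine Finset.sum_congr rfl fun i _ => ?_
              rw [hhdef]
              simp only [map_smul]
              rfl
          _ = Finsupp.linearCombination ℂ u c := hgenH u
          _ = Ψ c := rfl
      have hsum2 : ∑ i, π (S i) (W (h i)) = Φ c := by
        calc ∑ i, π (S i) (W (h i))
            = ∑ i, c (g i) • v (g i) := by
              refine Finset.sum_congr rfl fun i _ => ?_
              rw [hhdef]
              calc π (S i) (W (c (g i) • (g i).2))
                  = π (S i) (c (g i) • W ((g i).2)) := by rw [map_smul]
                _ = c (g i) • π (S i) (W ((g i).2)) := by rw [map_smul]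
                _ = c (g i) • v (g i) := rfl
          _ = Finsupp.linearCombination ℂ v c := hgenK v
          _ = Φ c := rfl
      have := hPB m S hS h
      rw [sum_inner_P_eq hSt S hS h, hsum1, hsum2] at this
      have h2 : ((‖Ψ c‖ ^ 2 : ℝ) : ℂ) ≤ ((C * ‖Φ c‖ ^ 2 : ℝ) : ℂ) := by
        calc ((‖Ψ c‖ ^ 2 : ℝ) : ℂ) ≤ (C : ℂ) * ((‖Φ c‖ ^ 2 : ℝ) : ℂ) := this
          _ = ((C * ‖Φ c‖ ^ 2 : ℝ) : ℂ) := by push_cast; ring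
      exact Complex.real_le_real.mp h2
    have hker : LinearMap.ker Φ ≤ LinearMap.ker Ψ := by
      intro c hc
      rw [LinearMap.mem_ker] at hc ⊢
      have := keyineq c
      rw [hc, norm_zero] at this
      have h0 : ‖Ψ c‖ ^ 2 ≤ 0 := by simpa using this
      have : ‖Ψ c‖ = 0 := by nlinarith [norm_nonneg (Ψ c), sq_nonneg ‖Ψ c‖]
      exact norm_eq_zero.mp this
    set V : Submodule ℂ K := LinearMap.range Φ with hV_def
    have hVgens : V = Submodule.span ℂ {k : K | ∃ T ∈ M, ∃ h : H, k = π T (W h)} := by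
      rw [hV_def, hΦ_def, Finsupp.range_linearCombination]
      congr 1
      ext k
      constructor
      · rintro ⟨⟨⟨T, hT⟩, h⟩, rfl⟩
        exact ⟨T, hT, h, rfl⟩
      · rintro ⟨T, hT, h, rfl⟩
        exact ⟨⟨⟨T, hT⟩, h⟩, rfl⟩
    have hdense_span :
        Dense ((Submodule.span ℂ {k : K | ∃ T ∈ M, ∃ h : H, k = π T (W h)} : Submodule ℂ K)
          : Set K) :=
      Submodule.dense_iff_topologicalClosure_eq_top.mpr hmin.minimal
    have hVdense : Dense (V : Set K) := by rw [hVgens]; exact hdense_span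
    -- the densely defined operator
    set T₀ : V →ₗ[ℂ] H :=
      (Submodule.liftQ (LinearMap.ker Φ) Ψ hker).comp
        (Φ.quotKerEquivRange.symm.toLinearMap) with hT₀_def
    have hT₀ : ∀ c : (↥M × H) →₀ ℂ, T₀ ⟨Φ c, LinearMap.mem_range_self Φ c⟩ = Ψ c := by
      intro c
      have h1 : Φ.quotKerEquivRange (Submodule.Quotient.mk c)
          = ⟨Φ c, LinearMap.mem_range_self Φ c⟩ := by
        apply Subtype.ext
        exact Φ.quotKerEquivRange_apply_mk c
      have h2 : Φ.quotKerEquivRange.symm ⟨Φ c, LinearMap.mem_range_self Φ c⟩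
          = Submodule.Quotient.mk c := by
        rw [LinearEquiv.symm_apply_eq, h1]
      rw [hT₀_def]
      simp only [LinearMap.comp_apply, LinearEquiv.coe_toLinearMap]
      rw [h2, Submodule.liftQ_apply]
    have hbound : ∀ x : V, ‖T₀ x‖ ≤ Real.sqrt C * ‖x‖ := by
      rintro ⟨k, hk⟩
      obtain ⟨c, rfl⟩ := hk
      rw [hT₀ c]
      have h1 : ‖Ψ c‖ = Real.sqrt (‖Ψ c‖ ^ 2) := by
        rw [Real.sqrt_sq (norm_nonneg _)]
      have h2 : Real.sqrt (‖Ψ c‖ ^ 2) ≤ Real.sqrt (C * ‖Φ c‖ ^ 2) :=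
        Real.sqrt_le_sqrt (keyineq c)
      have h3 : Real.sqrt (C * ‖Φ c‖ ^ 2) = Real.sqrt C * ‖Φ c‖ := by
        rw [Real.sqrt_mul hC0, Real.sqrt_sq (norm_nonneg _)]
      calc ‖Ψ c‖ = Real.sqrt (‖Ψ c‖ ^ 2) := h1
        _ ≤ Real.sqrt (C * ‖Φ c‖ ^ 2) := h2
        _ = Real.sqrt C * ‖Φ c‖ := h3
    set f : V →L[ℂ] H := T₀.mkContinuous (Real.sqrt C) hbound with hf_def
    have hdr : DenseRange (V.subtypeL) := by
      have : Set.range (V.subtypeL) = (V : Set K) := Subtype.range_coe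
      rw [DenseRange, this]
      exact hVdense
    have hui : IsUniformInducing (V.subtypeL) :=
      isUniformEmbedding_subtype_val.isUniformInducing
    set T : K →L[ℂ] H := f.extend V.subtypeL with hT_def
    have hText : ∀ x : V, T (x : K) = f x := fun x =>
      ContinuousLinearMap.extend_eq f hdr hui x
    have hTgen : ∀ S ∈ M, ∀ h : H, T (π S (W h)) = S (ContinuousLinearMap.adjoint Y h) := by
      intro S hSm h
      set c : (↥M × H) →₀ ℂ := Finsupp.single (⟨⟨S, hSm⟩, h⟩ : ↥M × H) (1 : ℂ) with hc_def
      have hΦc : Φ c = π S (W h) := by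
        rw [hc_def, hΦ_def, Finsupp.linearCombination_single, one_smul]
      have hΨc : Ψ c = S (ContinuousLinearMap.adjoint Y h) := by
        rw [hc_def, hΨ_def, Finsupp.linearCombination_single, one_smul]
      have hmem : π S (W h) ∈ V := hΦc ▸ LinearMap.mem_range_self Φ c
      have hx : ((⟨π S (W h), hmem⟩ : V) : K) = π S (W h) := rfl
      calc T (π S (W h)) = T ((⟨π S (W h), hmem⟩ : V) : K) := by rw [hx]
        _ = f ⟨π S (W h), hmem⟩ := hText _
        _ = T₀ ⟨π S (W h), hmem⟩ := rfl
        _ = T₀ ⟨Φ c, LinearMap.mem_range_self Φ c⟩ := by congr 1; exact Subtype.ext hΦc.symm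
        _ = Ψ c := hT₀ c
        _ = S (ContinuousLinearMap.adjoint Y h) := hΨc
    -- `T` commutes with the actions
    have hcomm : ∀ S' ∈ M, S' ∘L T = T ∘L π S' := by
      intro S' hS'
      refine ContinuousLinearMap.ext_on hdense_span ?_
      rintro k ⟨T₁, hT₁, h, rfl⟩
      show (S' ∘L T) (π T₁ (W h)) = (T ∘L π S') (π T₁ (W h))
      rw [ContinuousLinearMap.comp_apply, ContinuousLinearMap.comp_apply, hTgen T₁ hT₁ h]
      have h1 : π S' (π T₁ (W h)) = π (S' * T₁) (W h) := by
        rw [hSt.rep.map_mul _ hS' _ hT₁]; rfl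
      rw [h1, hTgen (S' * T₁) (mul_mem hS' hT₁) h]
      rfl
    have hTW : T ∘L W = ContinuousLinearMap.adjoint Y := by
      ext h
      have := hTgen 1 (one_mem M) h
      rw [hSt.rep.map_one] at this
      simpa using this
    refine ⟨ContinuousLinearMap.adjoint T, ?_, ?_, ?_, ?_⟩
    · -- intertwining
      intro S hSm
      have hinj := (ContinuousLinearMap.adjoint (𝕜 := ℂ) (E := H) (F := K)).injective
      apply hinj
      rw [ContinuousLinearMap.adjoint_comp, ContinuousLinearMap.adjoint_comp,
        ContinuousLinearMap.adjoint_adjoint,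
        ← ContinuousLinearMap.star_eq_adjoint S, ← ContinuousLinearMap.star_eq_adjoint (π S),
        ← hSt.rep.map_star _ hSm]
      exact hcomm (star S) (star_mem hSm)
    · -- `W* X = Y`
      calc ContinuousLinearMap.adjoint W ∘L ContinuousLinearMap.adjoint T
          = ContinuousLinearMap.adjoint (T ∘L W) :=
            (ContinuousLinearMap.adjoint_comp T W).symm
        _ = ContinuousLinearMap.adjoint (ContinuousLinearMap.adjoint Y) := by rw [hTW]
        _ = Y := ContinuousLinearMap.adjoint_adjoint Y
    · -- the formula
      intro S hSm h
      rw [ContinuousLinearMap.adjoint_adjoint]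
      exact hTgen S hSm h
    · -- uniqueness
      intro X' hX' hYX'
      have hinj := (ContinuousLinearMap.adjoint (𝕜 := ℂ) (E := H) (F := K)).injective
      apply hinj
      rw [ContinuousLinearMap.adjoint_adjoint]
      refine ContinuousLinearMap.ext_on hdense_span ?_
      rintro k ⟨T₁, hT₁, h, rfl⟩
      show ContinuousLinearMap.adjoint X' (π T₁ (W h)) = T (π T₁ (W h))
      rw [hstar X' hX' T₁ hT₁, hTgen T₁ hT₁ h]
      have hX'W : ContinuousLinearMap.adjoint X' (W h) = ContinuousLinearMap.adjoint Y h := by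
        have := congrArg ContinuousLinearMap.adjoint hYX'
        rw [ContinuousLinearMap.adjoint_comp, ContinuousLinearMap.adjoint_adjoint] at this
        exact ContinuousLinearMap.ext_iff.mp this h
      rw [hX'W]
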